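/- Let n ≥ 3 and let δ ∈ (0, 2*−2] where 2* = 2n/(n−2). Suppose u_k : ℝⁿ → ℝ is a sequence of measurable functions and u : ℝⁿ → ℝ a measurable function such that u_k → u almost everywhere, u_k → u in L²(ℝⁿ), and u_k → u in L^{2+δ}(ℝⁿ). Then limsup_k ∫ u_k² log u_k² dx ≤ ∫ u² log u² dx, where ∫ v² log v² dx := ∫ G₂(v) dx − ∫ G₁(v) dx is understood as a value in [−∞, +∞) (∫G₂(v) dx being finite under the stated integrability). In particular, along such sequences, ∫ G₂(u_k) dx → ∫ G₂(u) dx and liminf_k ∫ G₁(u_k) dx ≥ ∫ G₁(u) dx. -/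

import Mathlib

open MeasureTheory Real Filter
open scoped ENNReal NNReal

/-- `G₂(s) = (s² log s²)⁺`, the positive part of `s² log s²` (which vanishes at `s = 0`). -/
noncomputable def G₂ (s : ℝ) : ℝ := max (s ^ 2 * Real.log (s ^ 2)) 0

/-- `G₁(s) = (s² log s²)⁻`, the negative part of `s² log s²` (which vanishes at `s = 0`). -/
noncomputable def G₁ (s : ℝ) : ℝ := max (-(s ^ 2 * Real.log (s ^ 2))) 0

lemma G₂_eq (a : ℝ) :
    G₂ a = (max |a| 1) ^ 2 * Real.log ((max |a| 1) ^ 2) := by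
  rcases le_total |a| 1 with h | h
  · rw [max_eq_right h]
    simp only [one_pow, Real.log_one, mul_zero]
    apply max_eq_right
    apply mul_nonpos_of_nonneg_of_nonpos (sq_nonneg a)
    apply Real.log_nonpos (sq_nonneg a)
    calc a ^ 2 = |a| ^ 2 := (sq_abs a).symm
    _ ≤ 1 := by nlinarith [abs_nonneg a]
  · rw [max_eq_left h]
    rw [sq_abs]
    apply max_eq_left
    apply mul_nonneg (sq_nonneg a)
    apply Real.log_nonneg
    calc (1:ℝ) = 1 ^ 2 := by ring
    _ ≤ |a| ^ 2 := by nlinarith [abs_nonneg a]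
    _ = a ^ 2 := sq_abs a

lemma phi_deriv (x : ℝ) (hx : x ≠ 0) :
    HasDerivAt (fun s : ℝ => s ^ 2 * Real.log (s ^ 2))
      (2 * x * Real.log (x ^ 2) + 2 * x) x := by
  have h1 := hasDerivAt_pow 2 x
  have h2 : HasDerivAt (fun s : ℝ => Real.log (s ^ 2))
      ((2 * x ^ (2 - 1) : ℝ) / (x ^ 2)) x := h1.log (pow_ne_zero 2 hx)
  have := h1.mul h2
  have heq : 2 * x * Real.log (x ^ 2) + 2 * x
      = (2 * x ^ (2 - 1) : ℝ) * Real.log (x ^ 2)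
        + x ^ 2 * ((2 * x ^ (2 - 1) : ℝ) / (x ^ 2)) := by
    have hx2 : x ^ 2 ≠ 0 := pow_ne_zero 2 hx
    field_simp
    ring
  rw [heq]
  exact this

lemma phi_mvt {S T m : ℝ} (hS1 : 1 ≤ S) (hT1 : 1 ≤ T) (hSm : S ≤ m) (hTm : T ≤ m) :
    |S ^ 2 * Real.log (S ^ 2) - T ^ 2 * Real.log (T ^ 2)|
      ≤ (2 * m * Real.log (m ^ 2) + 2 * m) * |S - T| := by
  have hm1 : (1:ℝ) ≤ m := le_trans hS1 hSm
  have key := Convex.norm_image_sub_le_of_norm_hasDerivWithin_le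
    (f := fun s : ℝ => s ^ 2 * Real.log (s ^ 2))
    (f' := fun x : ℝ => 2 * x * Real.log (x ^ 2) + 2 * x)
    (C := 2 * m * Real.log (m ^ 2) + 2 * m) (s := Set.Icc 1 m)
    (fun x hx => (phi_deriv x (by rcases hx with ⟨h1, _⟩; positivity)).hasDerivWithinAt)
    ?_ (convex_Icc 1 m) ⟨hT1, hTm⟩ ⟨hS1, hSm⟩
  · simpa [Real.norm_eq_abs] using key
  · intro x hx
    rcases hx with ⟨h1, h2⟩
    have hx0 : (0:ℝ) < x := by linarith
    have hlx : 0 ≤ Real.log (x ^ 2) := Real.log_nonneg (by nlinarith)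
    have hlm : Real.log (x ^ 2) ≤ Real.log (m ^ 2) :=
      Real.log_le_log (by positivity) (by nlinarith)
    have hlm0 : 0 ≤ Real.log (m ^ 2) := le_trans hlx hlm
    have hkey : x * Real.log (x ^ 2) ≤ m * Real.log (m ^ 2) :=
      mul_le_mul h2 hlm hlx (by linarith)
    rw [Real.norm_eq_abs]
    rw [show |2 * x * Real.log (x ^ 2) + 2 * x| = 2 * x * Real.log (x ^ 2) + 2 * x from
      abs_of_nonneg (by nlinarith)]
    nlinarith

lemma G₂_diff_le {δ : ℝ} (hδ : 0 < δ) (a b : ℝ) :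
    |G₂ a - G₂ b| ≤ (2 * (|a| + |b|) + (4 / δ) * (|a| + |b|) ^ (1 + δ)) * |a - b| := by
  have ha0 := abs_nonneg a
  have hb0 := abs_nonneg b
  rcases le_total (max |a| |b|) 1 with h | h
  · have hZ : ∀ c : ℝ, |c| ≤ 1 → G₂ c = 0 := by
      intro c hc
      rw [G₂_eq, max_eq_right hc]
      simp
    rw [hZ a (le_trans (le_max_left _ _) h), hZ b (le_trans (le_max_right _ _) h)]
    simp only [sub_zero, abs_zero]
    positivity
  · set m := max |a| |b| with hm
    have hm1 : (1:ℝ) ≤ m := h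
    have hm0 : (0:ℝ) < m := by linarith
    have hmab : m ≤ |a| + |b| := max_le (by linarith) (by linarith)
    have hST : |max |a| 1 - max |b| 1| ≤ |a - b| :=
      le_trans (abs_max_sub_max_le_abs _ _ _) (abs_abs_sub_abs_le_abs_sub a b)
    have h1 : |G₂ a - G₂ b|
        ≤ (2 * m * Real.log (m ^ 2) + 2 * m) * |max |a| 1 - max |b| 1| := by
      rw [G₂_eq a, G₂_eq b]
      exact phi_mvt (le_max_right _ _) (le_max_right _ _)
        (max_le (le_max_left _ _) hm1) (max_le (le_max_right _ _) hm1)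
    have hC0 : 0 ≤ 2 * m * Real.log (m ^ 2) + 2 * m := by
      have : 0 ≤ Real.log (m ^ 2) := Real.log_nonneg (by nlinarith)
      nlinarith
    have h2 : |G₂ a - G₂ b| ≤ (2 * m * Real.log (m ^ 2) + 2 * m) * |a - b| :=
      le_trans h1 (by apply mul_le_mul_of_nonneg_left hST hC0)
    refine le_trans h2 (mul_le_mul_of_nonneg_right ?_ (abs_nonneg _))
    -- coefficient comparison
    have hlog : Real.log m ≤ m ^ δ / δ := by
      have h3 : Real.log (m ^ δ) = δ * Real.log m := Real.log_rpow hm0 δ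
      have h4 : Real.log (m ^ δ) ≤ m ^ δ - 1 :=
        Real.log_le_sub_one_of_pos (Real.rpow_pos_of_pos hm0 δ)
      have h5 : δ * Real.log m ≤ m ^ δ - 1 := by rw [← h3]; exact h4
      rw [le_div_iff₀ hδ]
      nlinarith
    have hrp : m * m ^ δ = m ^ (1 + δ) := by
      rw [Real.rpow_add hm0, Real.rpow_one]
    have hpow_le : m ^ (1 + δ) ≤ (|a| + |b|) ^ (1 + δ) :=
      Real.rpow_le_rpow (le_of_lt hm0) hmab (by linarith)
    have hlogm2 : Real.log (m ^ 2) = 2 * Real.log m := by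
      rw [show m ^ 2 = m * m by ring, Real.log_mul (ne_of_gt hm0) (ne_of_gt hm0)]
      ring
    have hmδ : 0 < m ^ δ := Real.rpow_pos_of_pos hm0 δ
    calc 2 * m * Real.log (m ^ 2) + 2 * m
        = 4 * (m * Real.log m) + 2 * m := by rw [hlogm2]; ring
      _ ≤ 4 * (m * (m ^ δ / δ)) + 2 * m := by
          have := mul_le_mul_of_nonneg_left hlog (le_of_lt hm0)
          nlinarith
      _ = (4 / δ) * (m * m ^ δ) + 2 * m := by field_simp
      _ = (4 / δ) * m ^ (1 + δ) + 2 * m := by rw [hrp]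
      _ ≤ (4 / δ) * (|a| + |b|) ^ (1 + δ) + 2 * (|a| + |b|) := by
          have h40 : 0 ≤ 4 / δ := by positivity
          nlinarith [mul_le_mul_of_nonneg_left hpow_le h40]
      _ = 2 * (|a| + |b|) + (4 / δ) * (|a| + |b|) ^ (1 + δ) := by ring

lemma phi_cont : Continuous (fun s : ℝ => s ^ 2 * Real.log (s ^ 2)) := by
  have : (fun s : ℝ => s ^ 2 * Real.log (s ^ 2)) =
      (fun t : ℝ => t * Real.log t) ∘ (fun s : ℝ => s ^ 2) := rfl
  rw [this]
  exact Real.continuous_mul_log.comp (continuous_pow 2)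

lemma G₂_cont : Continuous G₂ := phi_cont.max continuous_const
lemma G₁_cont : Continuous G₁ := phi_cont.neg.max continuous_const

lemma G₂_nonneg (s : ℝ) : 0 ≤ G₂ s := le_max_right _ _

lemma log_le_rpow_div {δ x : ℝ} (hδ : 0 < δ) (hx : 0 < x) : Real.log x ≤ x ^ δ / δ := by
  have h3 : Real.log (x ^ δ) = δ * Real.log x := Real.log_rpow hx δ
  have h4 : Real.log (x ^ δ) ≤ x ^ δ - 1 :=
    Real.log_le_sub_one_of_pos (Real.rpow_pos_of_pos hx δ)
  rw [le_div_iff₀ hδ]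
  nlinarith

lemma G₂_le {δ : ℝ} (hδ : 0 < δ) (s : ℝ) : G₂ s ≤ (2 / δ) * |s| ^ (2 + δ) := by
  have hs0 := abs_nonneg s
  rcases le_total |s| 1 with h | h
  · rw [G₂_eq, max_eq_right h]
    simp only [one_pow, Real.log_one, mul_zero]
    positivity
  · have hpos : (0:ℝ) < |s| := by linarith
    rw [G₂_eq, max_eq_left h]
    have hlog : Real.log (|s| ^ 2) = 2 * Real.log |s| := by
      rw [show |s| ^ 2 = |s| * |s| by ring, Real.log_mul (ne_of_gt hpos) (ne_of_gt hpos)]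
      ring
    have hlb : Real.log |s| ≤ |s| ^ δ / δ := log_le_rpow_div hδ hpos
    have hsplit : |s| ^ ((2:ℝ) + δ) = |s| ^ (2:ℕ) * |s| ^ δ := by
      rw [show (2:ℝ) + δ = ((2:ℕ):ℝ) + δ by norm_num, Real.rpow_add hpos, Real.rpow_natCast]
    rw [hlog, hsplit]
    have hδ' : 0 < |s| ^ δ := Real.rpow_pos_of_pos hpos δ
    have h2 : |s| ^ 2 * (2 * Real.log |s|) ≤ |s| ^ 2 * (2 * (|s| ^ δ / δ)) := by
      apply mul_le_mul_of_nonneg_left _ (sq_nonneg _)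
      linarith
    calc |s| ^ 2 * (2 * Real.log |s|)
        ≤ |s| ^ 2 * (2 * (|s| ^ δ / δ)) := h2
      _ = 2 / δ * (|s| ^ 2 * |s| ^ δ) := by field_simp

variable {α : Type*} [MeasurableSpace α] {μ : Measure α}

lemma integrable_G₂ {δ : ℝ} (hδ : 0 < δ) {f : α → ℝ} (hfm : Measurable f)
    (hf : MemLp f (ENNReal.ofReal (2 + δ)) μ) : Integrable (fun x => G₂ (f x)) μ := by
  have h2δ : (0:ℝ) < 2 + δ := by linarith
  have hi : Integrable (fun x => ‖f x‖ ^ (ENNReal.ofReal (2 + δ)).toReal) μ :=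
    hf.integrable_norm_rpow (by simp [ENNReal.ofReal_eq_zero]; linarith) ENNReal.ofReal_ne_top
  rw [ENNReal.toReal_ofReal h2δ.le] at hi
  refine (hi.const_mul (2 / δ)).mono'
    ((G₂_cont.measurable.comp hfm).aestronglyMeasurable) ?_
  filter_upwards with x
  rw [Real.norm_eq_abs, abs_of_nonneg (G₂_nonneg _)]
  simpa [Real.norm_eq_abs] using G₂_le hδ (f x)

lemma lint_bridge {f : α → ℝ} {r : ℝ} (hr : 0 < r) :
    (∫⁻ x, (ENNReal.ofReal |f x|) ^ r ∂μ) ^ (1 / r) = eLpNorm f (ENNReal.ofReal r) μ := by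
  rw [eLpNorm_eq_lintegral_rpow_enorm_toReal (by simp [ENNReal.ofReal_eq_zero]; linarith)
    ENNReal.ofReal_ne_top, ENNReal.toReal_ofReal hr.le]
  congr 1
  apply lintegral_congr
  intro x
  rw [← Real.enorm_eq_ofReal_abs]

lemma L1_bound {δ : ℝ} (hδ : 0 < δ) {f g : α → ℝ} (hfm : Measurable f) (hgm : Measurable g) :
    (∫⁻ x, (‖G₂ (f x) - G₂ (g x)‖₊ : ℝ≥0∞) ∂μ)
      ≤ ENNReal.ofReal 2 * ((eLpNorm f (ENNReal.ofReal 2) μ + eLpNorm g (ENNReal.ofReal 2) μ)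
            * eLpNorm (f - g) (ENNReal.ofReal 2) μ)
        + ENNReal.ofReal (4 / δ)
            * ((eLpNorm f (ENNReal.ofReal (2 + δ)) μ + eLpNorm g (ENNReal.ofReal (2 + δ)) μ)
                ^ (1 + δ) * eLpNorm (f - g) (ENNReal.ofReal (2 + δ)) μ) := by
  have h2δ : (0:ℝ) < 2 + δ := by linarith
  have h1δ : (0:ℝ) < 1 + δ := by linarith
  set A : α → ℝ≥0∞ := fun x => ENNReal.ofReal |f x| + ENNReal.ofReal |g x| with hA
  set W : α → ℝ≥0∞ := fun x => ENNReal.ofReal |f x - g x| with hW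
  have hAm : Measurable A :=
    (ENNReal.measurable_ofReal.comp hfm.abs).add (ENNReal.measurable_ofReal.comp hgm.abs)
  have hWm : Measurable W := ENNReal.measurable_ofReal.comp (hfm.sub hgm).abs
  -- pointwise bound
  have hpt : ∀ x, (‖G₂ (f x) - G₂ (g x)‖₊ : ℝ≥0∞)
      ≤ ENNReal.ofReal 2 * (A x * W x) + ENNReal.ofReal (4 / δ) * (A x ^ (1 + δ) * W x) := by
    intro x
    rw [← enorm_eq_nnnorm, Real.enorm_eq_ofReal_abs]
    have habs : (0:ℝ) ≤ |f x| + |g x| := by positivity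
    calc ENNReal.ofReal |G₂ (f x) - G₂ (g x)|
        ≤ ENNReal.ofReal ((2 * (|f x| + |g x|) + (4 / δ) * (|f x| + |g x|) ^ (1 + δ))
            * |f x - g x|) := ENNReal.ofReal_le_ofReal (G₂_diff_le hδ _ _)
      _ = (ENNReal.ofReal (2 * (|f x| + |g x|))
            + ENNReal.ofReal ((4 / δ) * (|f x| + |g x|) ^ (1 + δ))) * W x := by
          rw [ENNReal.ofReal_mul (by positivity), ENNReal.ofReal_add (by positivity) (by positivity)]
      _ = (ENNReal.ofReal 2 * A x + ENNReal.ofReal (4 / δ) * A x ^ (1 + δ)) * W x := by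
          simp only [hA]
          rw [ENNReal.ofReal_mul (by norm_num : (0:ℝ) ≤ 2),
            ENNReal.ofReal_mul (by positivity : (0:ℝ) ≤ 4 / δ),
            ← ENNReal.ofReal_add (abs_nonneg _) (abs_nonneg _),
            ENNReal.ofReal_rpow_of_nonneg habs h1δ.le]
      _ = ENNReal.ofReal 2 * (A x * W x) + ENNReal.ofReal (4 / δ) * (A x ^ (1 + δ) * W x) := by
          ring
  -- integrate
  have hsplit : (∫⁻ x, (‖G₂ (f x) - G₂ (g x)‖₊ : ℝ≥0∞) ∂μ)
      ≤ ENNReal.ofReal 2 * (∫⁻ x, A x * W x ∂μ)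
        + ENNReal.ofReal (4 / δ) * (∫⁻ x, A x ^ (1 + δ) * W x ∂μ) := by
    calc (∫⁻ x, (‖G₂ (f x) - G₂ (g x)‖₊ : ℝ≥0∞) ∂μ)
        ≤ ∫⁻ x, ENNReal.ofReal 2 * (A x * W x)
            + ENNReal.ofReal (4 / δ) * (A x ^ (1 + δ) * W x) ∂μ := lintegral_mono hpt
      _ = ∫⁻ x, ENNReal.ofReal 2 * (A x * W x) ∂μ
            + ∫⁻ x, ENNReal.ofReal (4 / δ) * (A x ^ (1 + δ) * W x) ∂μ :=
          lintegral_add_left ((hAm.mul hWm).const_mul _) _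
      _ = ENNReal.ofReal 2 * (∫⁻ x, A x * W x ∂μ)
            + ENNReal.ofReal (4 / δ) * (∫⁻ x, A x ^ (1 + δ) * W x ∂μ) := by
          rw [lintegral_const_mul (f := fun x => A x * W x) _ (hAm.mul hWm),
            lintegral_const_mul (f := fun x => A x ^ (1 + δ) * W x) _ (((hAm.pow_const _)).mul hWm)]
  refine hsplit.trans (add_le_add (mul_le_mul_right ?_ _) (mul_le_mul_right ?_ _))
  -- first Hölder term
  · have hpq : Real.HolderConjugate 2 2 := Real.holderConjugate_iff.2 ⟨one_lt_two, by norm_num⟩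
    have hH := ENNReal.lintegral_mul_le_Lp_mul_Lq μ hpq hAm.aemeasurable hWm.aemeasurable
    simp only [Pi.mul_apply] at hH
    refine hH.trans (mul_le_mul' ?_ ?_)
    · -- Minkowski for A
      have hM := ENNReal.lintegral_Lp_add_le (μ := μ)
        (ENNReal.measurable_ofReal.comp hfm.abs).aemeasurable
        (ENNReal.measurable_ofReal.comp hgm.abs).aemeasurable (one_le_two (α := ℝ))
      simp only [Pi.add_apply] at hM
      calc (∫⁻ x, A x ^ (2:ℝ) ∂μ) ^ (1 / (2:ℝ))
          ≤ (∫⁻ x, (ENNReal.ofReal |f x|) ^ (2:ℝ) ∂μ) ^ (1 / (2:ℝ))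
            + (∫⁻ x, (ENNReal.ofReal |g x|) ^ (2:ℝ) ∂μ) ^ (1 / (2:ℝ)) := hM
        _ = eLpNorm f (ENNReal.ofReal 2) μ + eLpNorm g (ENNReal.ofReal 2) μ := by
            rw [lint_bridge two_pos, lint_bridge two_pos]
    · have : (∫⁻ x, W x ^ (2:ℝ) ∂μ) ^ (1 / (2:ℝ)) = eLpNorm (f - g) (ENNReal.ofReal 2) μ := by
        rw [← lint_bridge two_pos]
        simp [hW]
      exact this.le
  -- second Hölder term
  · have hne1 : (1:ℝ) + δ ≠ 0 := by linarith
    have hne2 : (2:ℝ) + δ ≠ 0 := by linarith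
    have hpq : Real.HolderConjugate ((2 + δ) / (1 + δ)) (2 + δ) := by
      rw [Real.holderConjugate_iff]
      constructor
      · rw [lt_div_iff₀ h1δ]; linarith
      · field_simp
        ring
    have hH := ENNReal.lintegral_mul_le_Lp_mul_Lq μ hpq
      (hAm.pow_const (1 + δ)).aemeasurable hWm.aemeasurable
    simp only [Pi.mul_apply] at hH
    have hrw : ∀ x, (A x ^ (1 + δ)) ^ ((2 + δ) / (1 + δ)) = A x ^ ((2:ℝ) + δ) := by
      intro x
      rw [← ENNReal.rpow_mul]
      congr 1
      field_simp
    have hexp : (1:ℝ) / ((2 + δ) / (1 + δ)) = (1 / (2 + δ)) * (1 + δ) := by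
      field_simp
    have hM2 : (∫⁻ x, A x ^ ((2:ℝ) + δ) ∂μ) ^ ((1:ℝ) / (2 + δ))
        ≤ eLpNorm f (ENNReal.ofReal (2 + δ)) μ + eLpNorm g (ENNReal.ofReal (2 + δ)) μ := by
      have hM := ENNReal.lintegral_Lp_add_le (μ := μ)
        (ENNReal.measurable_ofReal.comp hfm.abs).aemeasurable
        (ENNReal.measurable_ofReal.comp hgm.abs).aemeasurable
        (by linarith : (1:ℝ) ≤ 2 + δ)
      simp only [Pi.add_apply] at hM
      calc (∫⁻ x, A x ^ ((2:ℝ) + δ) ∂μ) ^ ((1:ℝ) / (2 + δ))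
          ≤ (∫⁻ x, (ENNReal.ofReal |f x|) ^ ((2:ℝ) + δ) ∂μ) ^ ((1:ℝ) / (2 + δ))
            + (∫⁻ x, (ENNReal.ofReal |g x|) ^ ((2:ℝ) + δ) ∂μ) ^ ((1:ℝ) / (2 + δ)) := hM
        _ = _ := by rw [lint_bridge h2δ, lint_bridge h2δ]
    have hW2 : (∫⁻ x, W x ^ ((2:ℝ) + δ) ∂μ) ^ ((1:ℝ) / (2 + δ))
        = eLpNorm (f - g) (ENNReal.ofReal (2 + δ)) μ := by
      rw [← lint_bridge h2δ]
      simp [hW]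
    refine hH.trans (mul_le_mul' ?_ hW2.le)
    rw [lintegral_congr hrw, hexp, ENNReal.rpow_mul]
    exact ENNReal.rpow_le_rpow hM2 h1δ.le

lemma G2_L1_tendsto {δ : ℝ} (hδ : 0 < δ) {u : ℕ → α → ℝ} {v : α → ℝ}
    (hmeas : ∀ k, Measurable (u k)) (hvmeas : Measurable v)
    (hvL2 : MemLp v 2 μ)
    (hL2conv : Tendsto (fun k => eLpNorm (u k - v) 2 μ) atTop (nhds 0))
    (hvLp : MemLp v (ENNReal.ofReal (2 + δ)) μ)
    (hLpconv : Tendsto (fun k => eLpNorm (u k - v) (ENNReal.ofReal (2 + δ)) μ) atTop (nhds 0)) :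
    Tendsto (fun k => ∫⁻ x, (‖G₂ (u k x) - G₂ (v x)‖₊ : ℝ≥0∞) ∂μ) atTop (nhds 0) := by
  have h2δ : (0:ℝ) < 2 + δ := by linarith
  have h1δ : (0:ℝ) < 1 + δ := by linarith
  have hofReal2 : ENNReal.ofReal (2:ℝ) = (2:ℝ≥0∞) := by
    rw [show ((2:ℝ≥0∞)) = ENNReal.ofReal ((2:ℝ)) by norm_num]
  set pδ := ENNReal.ofReal (2 + δ) with hpδ
  set C2 : ℝ≥0∞ := 2 * (2 * eLpNorm v 2 μ + 1) with hC2def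
  set Cδ : ℝ≥0∞ := ENNReal.ofReal (4 / δ) * (2 * eLpNorm v pδ μ + 1) ^ (1 + δ) with hCδdef
  have h1pδ : (1:ℝ≥0∞) ≤ pδ := by
    rw [hpδ, ← ENNReal.ofReal_one]
    exact ENNReal.ofReal_le_ofReal (by linarith)
  have htri2 : ∀ k, eLpNorm (u k) 2 μ ≤ eLpNorm (u k - v) 2 μ + eLpNorm v 2 μ := by
    intro k
    have h : u k = (u k - v) + v := by ext x; simp
    calc eLpNorm (u k) 2 μ = eLpNorm ((u k - v) + v) 2 μ := by rw [← h]
      _ ≤ _ := eLpNorm_add_le ((hmeas k).sub hvmeas).aestronglyMeasurable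
          hvmeas.aestronglyMeasurable one_le_two
  have htriδ : ∀ k, eLpNorm (u k) pδ μ ≤ eLpNorm (u k - v) pδ μ + eLpNorm v pδ μ := by
    intro k
    have h : u k = (u k - v) + v := by ext x; simp
    calc eLpNorm (u k) pδ μ = eLpNorm ((u k - v) + v) pδ μ := by rw [← h]
      _ ≤ _ := eLpNorm_add_le ((hmeas k).sub hvmeas).aestronglyMeasurable
          hvmeas.aestronglyMeasurable h1pδ
  have hev2 : ∀ᶠ k in atTop, eLpNorm (u k - v) 2 μ ≤ 1 :=
    (hL2conv.eventually_lt_const zero_lt_one).mono fun k hk => hk.le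
  have hevδ : ∀ᶠ k in atTop, eLpNorm (u k - v) pδ μ ≤ 1 :=
    (hLpconv.eventually_lt_const zero_lt_one).mono fun k hk => hk.le
  have hbound : ∀ᶠ k in atTop, (∫⁻ x, (‖G₂ (u k x) - G₂ (v x)‖₊ : ℝ≥0∞) ∂μ)
      ≤ C2 * eLpNorm (u k - v) 2 μ + Cδ * eLpNorm (u k - v) pδ μ := by
    filter_upwards [hev2, hevδ] with k h2k hδk
    refine (L1_bound hδ (hmeas k) hvmeas).trans ?_
    rw [hofReal2, ← hpδ]
    have hb2 : eLpNorm (u k) 2 μ + eLpNorm v 2 μ ≤ 2 * eLpNorm v 2 μ + 1 := by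
      calc eLpNorm (u k) 2 μ + eLpNorm v 2 μ
          ≤ (eLpNorm (u k - v) 2 μ + eLpNorm v 2 μ) + eLpNorm v 2 μ :=
            add_le_add_left (htri2 k) _
        _ ≤ (1 + eLpNorm v 2 μ) + eLpNorm v 2 μ := add_le_add_left (add_le_add_left h2k _) _
        _ = 2 * eLpNorm v 2 μ + 1 := by ring
    have hbδ : eLpNorm (u k) pδ μ + eLpNorm v pδ μ ≤ 2 * eLpNorm v pδ μ + 1 := by
      calc eLpNorm (u k) pδ μ + eLpNorm v pδ μ
          ≤ (eLpNorm (u k - v) pδ μ + eLpNorm v pδ μ) + eLpNorm v pδ μ :=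
            add_le_add_left (htriδ k) _
        _ ≤ (1 + eLpNorm v pδ μ) + eLpNorm v pδ μ := add_le_add_left (add_le_add_left hδk _) _
        _ = 2 * eLpNorm v pδ μ + 1 := by ring
    apply add_le_add
    · rw [hC2def, mul_assoc]
      exact mul_le_mul_right (mul_le_mul_left hb2 _) _
    · rw [hCδdef, mul_assoc]
      exact mul_le_mul_right (mul_le_mul_left
        (ENNReal.rpow_le_rpow hbδ h1δ.le) _) _
  have hv2ne : eLpNorm v 2 μ ≠ ⊤ := hvL2.eLpNorm_ne_top
  have hvδne : eLpNorm v pδ μ ≠ ⊤ := hvLp.eLpNorm_ne_top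
  have hC2ne : C2 ≠ ⊤ := by
    rw [hC2def]
    exact ENNReal.mul_ne_top (by norm_num)
      (ENNReal.add_ne_top.2 ⟨ENNReal.mul_ne_top (by norm_num) hv2ne, ENNReal.one_ne_top⟩)
  have hCδne : Cδ ≠ ⊤ := by
    rw [hCδdef]
    exact ENNReal.mul_ne_top ENNReal.ofReal_ne_top
      (ENNReal.rpow_ne_top_of_nonneg h1δ.le
        (ENNReal.add_ne_top.2 ⟨ENNReal.mul_ne_top (by norm_num) hvδne, ENNReal.one_ne_top⟩))
  have hlim : Tendsto (fun k => C2 * eLpNorm (u k - v) 2 μ + Cδ * eLpNorm (u k - v) pδ μ)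
      atTop (nhds 0) := by
    have t1 := ENNReal.Tendsto.const_mul hL2conv (Or.inr hC2ne)
    have t2 := ENNReal.Tendsto.const_mul hLpconv (Or.inr hCδne)
    simpa using t1.add t2
  exact tendsto_of_tendsto_of_tendsto_of_le_of_le' tendsto_const_nhds hlim
    (Eventually.of_forall fun k => zero_le) hbound

lemma G2_integral_tendsto {δ : ℝ} (hδ : 0 < δ) {u : ℕ → α → ℝ} {v : α → ℝ}
    (hmeas : ∀ k, Measurable (u k)) (hvmeas : Measurable v)
    (hvL2 : MemLp v 2 μ)
    (hL2conv : Tendsto (fun k => eLpNorm (u k - v) 2 μ) atTop (nhds 0))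
    (hLp : ∀ k, MemLp (u k) (ENNReal.ofReal (2 + δ)) μ)
    (hvLp : MemLp v (ENNReal.ofReal (2 + δ)) μ)
    (hLpconv : Tendsto (fun k => eLpNorm (u k - v) (ENNReal.ofReal (2 + δ)) μ) atTop (nhds 0)) :
    Tendsto (fun k => ∫ x, G₂ (u k x) ∂μ) atTop (nhds (∫ x, G₂ (v x) ∂μ)) :=
  tendsto_integral_of_L1 _ (integrable_G₂ hδ hvmeas hvLp).aestronglyMeasurable
    (Eventually.of_forall fun k => integrable_G₂ hδ (hmeas k) (hLp k))
    (G2_L1_tendsto hδ hmeas hvmeas hvL2 hL2conv hvLp hLpconv)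

/-- Upper semicontinuity of `u ↦ ∫ u² log u²` along sequences converging a.e., in `L²`
and in `L^{2+δ}`, `0 < δ ≤ 2* − 2`: one has
`limsup_k ∫ u_k² log u_k² ≤ ∫ u² log u²` (with values in `[−∞, +∞)`, writing
`∫ v² log v² = ∫ G₂(v) − ∫ G₁(v)`); in particular `∫ G₂(u_k) → ∫ G₂(u)` and
`∫ G₁(u) ≤ liminf_k ∫ G₁(u_k)`. -/
theorem upper_semicontinuity_log_integral (n : ℕ) (hn : 3 ≤ n)
    (δ : ℝ) (hδ0 : 0 < δ) (hδ1 : δ ≤ 2 * n / (n - 2) - 2)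
    (u : ℕ → EuclideanSpace ℝ (Fin n) → ℝ) (v : EuclideanSpace ℝ (Fin n) → ℝ)
    (hmeas : ∀ k, Measurable (u k)) (hvmeas : Measurable v)
    (hae : ∀ᵐ x : EuclideanSpace ℝ (Fin n), Tendsto (fun k => u k x) atTop (nhds (v x)))
    (hL2 : ∀ k, MemLp (u k) 2 volume) (hvL2 : MemLp v 2 volume)
    (hL2conv : Tendsto (fun k => eLpNorm (u k - v) 2 volume) atTop (nhds 0))
    (hLp : ∀ k, MemLp (u k) (ENNReal.ofReal (2 + δ)) volume)
    (hvLp : MemLp v (ENNReal.ofReal (2 + δ)) volume)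
    (hLpconv : Tendsto (fun k => eLpNorm (u k - v) (ENNReal.ofReal (2 + δ)) volume)
      atTop (nhds 0)) :
    Filter.limsup (fun k =>
        ((∫ x, G₂ (u k x) : ℝ) : EReal)
          - ENNReal.toEReal (∫⁻ x, ENNReal.ofReal (G₁ (u k x)))) atTop
      ≤ ((∫ x, G₂ (v x) : ℝ) : EReal)
          - ENNReal.toEReal (∫⁻ x, ENNReal.ofReal (G₁ (v x))) ∧
    Tendsto (fun k => ∫ x, G₂ (u k x)) atTop (nhds (∫ x, G₂ (v x))) ∧
    (∫⁻ x, ENNReal.ofReal (G₁ (v x))) ≤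
      Filter.liminf (fun k => ∫⁻ x, ENNReal.ofReal (G₁ (u k x))) atTop := by
  have hG1m : ∀ k, Measurable fun x : EuclideanSpace ℝ (Fin n) =>
      ENNReal.ofReal (G₁ (u k x)) := fun k =>
    ENNReal.measurable_ofReal.comp (G₁_cont.measurable.comp (hmeas k))
  have part3 : (∫⁻ x, ENNReal.ofReal (G₁ (v x))) ≤
      Filter.liminf (fun k => ∫⁻ x, ENNReal.ofReal (G₁ (u k x))) atTop := by
    have hcongr : (fun x : EuclideanSpace ℝ (Fin n) => ENNReal.ofReal (G₁ (v x)))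
        =ᵐ[volume] fun x => Filter.liminf (fun k => ENNReal.ofReal (G₁ (u k x))) atTop := by
      filter_upwards [hae] with x hx
      exact (((ENNReal.continuous_ofReal.tendsto _).comp
        ((G₁_cont.tendsto _).comp hx)).liminf_eq).symm
    calc (∫⁻ x, ENNReal.ofReal (G₁ (v x)))
        = ∫⁻ x, Filter.liminf (fun k => ENNReal.ofReal (G₁ (u k x))) atTop :=
          lintegral_congr_ae hcongr
      _ ≤ _ := lintegral_liminf_le hG1m
  have part2 : Tendsto (fun k => ∫ x, G₂ (u k x)) atTop (nhds (∫ x, G₂ (v x))) :=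
    G2_integral_tendsto hδ0 hmeas hvmeas hvL2 hL2conv hLp hvLp hLpconv
  refine ⟨?_, part2, part3⟩
  set A : EReal := ((∫ x, G₂ (v x) : ℝ) : EReal) with hA
  set B : ℕ → ℝ≥0∞ := fun k => ∫⁻ x, ENNReal.ofReal (G₁ (u k x)) with hB
  set Bv : ℝ≥0∞ := ∫⁻ x, ENNReal.ofReal (G₁ (v x)) with hBv
  have hAlim : Tendsto (fun k => ((∫ x, G₂ (u k x) : ℝ) : EReal)) atTop (nhds A) :=
    (EReal.tendsto_coe).2 part2
  have hlimsupA : Filter.limsup (fun k => ((∫ x, G₂ (u k x) : ℝ) : EReal)) atTop = A :=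
    hAlim.limsup_eq
  have hliminfB : (Bv : EReal) ≤
      Filter.liminf (fun k => ((B k : ℝ≥0∞) : EReal)) atTop := by
    have hmap := (EReal.coe_ennreal_strictMono.monotone).map_liminf_of_continuousAt
      (F := atTop) B (continuous_coe_ennreal_ereal.continuousAt)
    have h1 : ((Filter.liminf B atTop : ℝ≥0∞) : EReal)
        = Filter.liminf (fun k => ((B k : ℝ≥0∞) : EReal)) atTop := hmap
    rw [← h1]
    exact EReal.coe_ennreal_le_coe_ennreal_iff.2 part3
  calc Filter.limsup (fun k => ((∫ x, G₂ (u k x) : ℝ) : EReal) - (B k : EReal)) atTop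
      = Filter.limsup ((fun k => ((∫ x, G₂ (u k x) : ℝ) : EReal))
          + (fun k => -((B k : ℝ≥0∞) : EReal))) atTop := by
        apply Filter.limsup_congr
        filter_upwards with k
        simp [sub_eq_add_neg]
    _ ≤ Filter.limsup (fun k => ((∫ x, G₂ (u k x) : ℝ) : EReal)) atTop
          + Filter.limsup (fun k => -((B k : ℝ≥0∞) : EReal)) atTop :=
        EReal.limsup_add_le
          (Or.inl (by rw [hlimsupA]; exact EReal.coe_ne_bot _))
          (Or.inl (by rw [hlimsupA]; exact EReal.coe_ne_top _))
    _ = A + - Filter.liminf (fun k => ((B k : ℝ≥0∞) : EReal)) atTop := by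
        rw [hlimsupA]
        congr 1
        exact EReal.limsup_neg
    _ ≤ A + - (Bv : EReal) :=
        add_le_add_right (EReal.neg_le_neg_iff.2 hliminfB) _
    _ = A - (Bv : EReal) := (sub_eq_add_neg _ _).symm
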